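/- Let p be a probability measure on ℝ^d and define the kernel κ : ℝ^d → ℝ by κ(δ) = ∫ cos(⟨ω, δ⟩) dp(ω). For ω ∈ ℝ^d and b ∈ ℝ define z_{ω,b}(x) = √2·cos(⟨ω, x⟩ + b). Then for all x, y ∈ ℝ^d, the expectation of z_{ω,b}(x)·z_{ω,b}(y), where ω is drawn from p and b is drawn (independently) from the uniform distribution on [0, 2π], equals κ(x − y); that is, ∫_{ℝ^d} (1/(2π)) ∫_0^{2π} 2 cos(⟨ω,x⟩ + b) cos(⟨ω,y⟩ + b) db dp(ω) = κ(x − y). -/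

import Mathlib

open MeasureTheory Real intervalIntegral

lemma cos_prod_integral (a c : ℝ) :
    ∫ b in (0:ℝ)..(2 * π), 2 * Real.cos (a + b) * Real.cos (c + b)
      = (2 * π) * Real.cos (a - c) := by
  have h : ∀ b : ℝ, 2 * Real.cos (a + b) * Real.cos (c + b)
      = Real.cos (a - c) + Real.cos ((a + c) + 2 * b) := by
    intro b
    have h1 := Real.cos_add (a + b) (c + b)
    have h2 := Real.cos_sub (a + b) (c + b)
    rw [show a + b - (c + b) = a - c by ring] at h2
    rw [show a + b + (c + b) = a + c + 2 * b by ring] at h1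
    linarith
  simp only [h]
  rw [intervalIntegral.integral_add (_root_.intervalIntegrable_const)
    (by apply Continuous.intervalIntegrable; continuity)]
  have h2 : (∫ b in (0:ℝ)..(2 * π), Real.cos ((a + c) + 2 * b)) = 0 := by
    have := intervalIntegral.integral_comp_mul_add (a := (0:ℝ)) (b := 2*π)
      (f := Real.cos) (c := 2) (by norm_num) (a + c)
    simp only [show ∀ b:ℝ, 2 * b + (a+c) = (a+c) + 2*b from fun b => by ring] at this
    rw [this]
    simp [integral_cos]
    rw [show a + c + 2 * (2*π) = (a+c) + (2:ℤ)*(2*π) by push_cast; ring,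
      Real.sin_add_int_mul_two_pi]
    ring
  rw [h2]
  simp [mul_comm]


/-- Random Fourier feature representation of a shift-invariant kernel:
if `κ δ = ∫ cos ⟪ω, δ⟫ ∂p` for a probability measure `p` on `ℝ^d`, then for all `x y`,
averaging `z_{ω,b}(x) z_{ω,b}(y) = 2 cos(⟪ω,x⟫+b) cos(⟪ω,y⟫+b)` over `ω ~ p` and
`b` uniform on `[0, 2π]` recovers `κ (x - y)`. -/
theorem rff_kernel_expectation
    {d : ℕ} (p : Measure (EuclideanSpace ℝ (Fin d))) [IsProbabilityMeasure p]
    (κ : EuclideanSpace ℝ (Fin d) → ℝ)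
    (hκ : ∀ δ, κ δ = ∫ ω, Real.cos (inner ℝ ω δ : ℝ) ∂p)
    (x y : EuclideanSpace ℝ (Fin d)) :
    ∫ ω, ((1 / (2 * π)) *
        ∫ b in (0:ℝ)..(2 * π),
          2 * Real.cos ((inner ℝ ω x : ℝ) + b) * Real.cos ((inner ℝ ω y : ℝ) + b)) ∂p
      = κ (x - y) := by
  rw [hκ]
  have hπ : (2 * π) ≠ 0 := by positivity
  congr 1
  funext ω
  rw [cos_prod_integral, inner_sub_right]
  field_simp
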